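/- Under these hypotheses, for all Φ ∈ F, X ∈ X̄ and Y, Y₁, Y₂ ∈ X̄: δ_{ΦX} f = Φ(δ_X f) for every f ∈ A; ∇_{ΦX} Y = Φ(∇_X Y); and δ_X⟨Y₁, Y₂⟩ = ⟨∇_X Y₁, Y₂⟩ + ⟨Y₁, ∇_X Y₂⟩. -/

import Mathlib

/-- For all `Φ ∈ F`, `X, Y, Y₁, Y₂ ∈ X̄` (realized as `Fin 3 → A`):
`δ_{ΦX} f = Φ (δ_X f)`, `∇_{ΦX} Y = Φ (∇_X Y)`, and
`δ_X ⟨Y₁, Y₂⟩ = ⟨∇_X Y₁, Y₂⟩ + ⟨Y₁, ∇_X Y₂⟩`. -/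
theorem ECL_F_linearity_and_metric_compatibility
    {A : Type*} [CommRing A] [Algebra ℝ A]
    -- ∂^ℤ-algebra structure on A
    (D : ℤ → A →ₗ[ℝ] A)
    (hD_comp : ∀ (m n : ℤ) (f : A), D m (D n f) = D (m + n) f)
    (hD_leibniz : ∀ f g : A, D 1 (f * g) = D 1 f * g + f * D 1 g)
    (hD_parts : ∀ f g : A, D (-1) ((f - D 0 f) * g) = (f - D 0 f) * D (-1) g)
    -- the curvature `c` of the ambient space, and λ, κ, τ with λ, κ invertible
    (c : ℝ) (lam kap tau lamI kapI : A)
    (hlam : lam * lamI = 1) (hkap : kap * kapI = 1)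
    -- A is generated by λ, κ, τ, λ⁻¹, κ⁻¹ as an ℝ-subalgebra closed under all ∂^m
    (hgen : ∀ S : Subalgebra ℝ A, lam ∈ S → kap ∈ S → tau ∈ S → lamI ∈ S → kapI ∈ S →
      (∀ (m : ℤ), ∀ f ∈ S, D m f ∈ S) → S = ⊤)
    -- the free A-module X̄ with orthonormal basis T, N, B and its bilinear form
    (T N B : Fin 3 → A)
    (hT : T = ![1, 0, 0]) (hN : N = ![0, 1, 0]) (hB : B = ![0, 0, 1])
    (inner : (Fin 3 → A) → (Fin 3 → A) → A)
    (hinner : ∀ x y, inner x y = x 0 * y 0 + x 1 * y 1 + x 2 * y 2)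
    -- ∂_s := λ⁻¹ ∂¹
    (ds : A → A) (hds : ∀ f, ds f = lamI * D 1 f)
    -- ∇_s, determined by the Leibniz rule and the Frenet–Serret relations
    (nabS : (Fin 3 → A) →ₗ[ℝ] (Fin 3 → A))
    (hnabS_leib : ∀ (f : A) (x : Fin 3 → A), nabS (f • x) = ds f • x + f • nabS x)
    (hnabS_T : nabS T = kap • N)
    (hnabS_N : nabS N = -(kap • T) + tau • B)
    (hnabS_B : nabS B = -(tau • N))
    -- the variation operators δ_X, ℝ-linear in X
    (del : (Fin 3 → A) →ₗ[ℝ] A →ₗ[ℝ] A)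
    (hdel_mul : ∀ (x : Fin 3 → A) (f g : A), del x (f * g) = del x f * g + f * del x g)
    (hdel_D : ∀ (x : Fin 3 → A) (m : ℤ) (f : A), del x (D m f) = D m (del x f))
    (hdel_ds : ∀ (x : Fin 3 → A) (f : A),
      del x (ds f) = ds (del x f) - lamI * del x lam * ds f)
    (hdel_lam : ∀ x, del x lam = inner (lam • T) (nabS x))
    (hdel_kap : ∀ x, del x kap
      = inner N (nabS (nabS x) + c • x) - inner ((2 * kap) • T) (nabS x))
    (hdel_tau : ∀ x, del x tau
      = ds (inner (kapI • B) (nabS (nabS x) + c • x))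
        + inner (kap • B) (nabS x) - inner (tau • T) (nabS x))
    -- the operators ∇_X
    (nab : (Fin 3 → A) → (Fin 3 → A) →ₗ[ℝ] (Fin 3 → A))
    (hnab_leib : ∀ (x : Fin 3 → A) (f : A) (y : Fin 3 → A),
      nab x (f • y) = del x f • y + f • nab x y)
    (hnab_T : ∀ x, nab x T = inner N (nabS x) • N + inner B (nabS x) • B)
    (hnab_N : ∀ x, nab x N
      = inner (kapI • B) (nabS (nabS x) + c • x) • B - inner N (nabS x) • T)
    (hnab_B : ∀ x, nab x B
      = -(inner B (nabS x) • T) - inner (kapI • B) (nabS (nabS x) + c • x) • N)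
    (F : Set A) (hF : F = Set.range (fun f : A => f - D 0 f)) :
    -- δ and ∇ are F-linear in the vector-field slot
    (∀ Φ ∈ F, ∀ (x : Fin 3 → A) (f : A), del (Φ • x) f = Φ * del x f)
    ∧ (∀ Φ ∈ F, ∀ (x y : Fin 3 → A), nab (Φ • x) y = Φ • nab x y)
    -- δ is compatible with the bilinear form via ∇
    ∧ (∀ (x y₁ y₂ : Fin 3 → A),
        del x (inner y₁ y₂) = inner (nab x y₁) y₂ + inner y₁ (nab x y₂)) := by
  -- basic facts about del
  have hdel1 : ∀ y : Fin 3 → A, del y (1 : A) = 0 := by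
    intro y
    have h := hdel_mul y 1 1
    simp only [mul_one, one_mul] at h
    linear_combination -h
  have hdel_alg : ∀ (y : Fin 3 → A) (r : ℝ), del y (algebraMap ℝ A r) = 0 := by
    intro y r
    rw [Algebra.algebraMap_eq_smul_one, map_smul, hdel1, smul_zero]
  -- D 1 kills F
  have hD1F : ∀ f : A, D 1 (f - D 0 f) = 0 := by
    intro f
    have h := hD_comp 1 0 f
    norm_num at h
    rw [map_sub, h, sub_self]
  have hmul1 : ∀ (f g : A), D 1 ((f - D 0 f) * g) = (f - D 0 f) * D 1 g := by
    intro f g; rw [hD_leibniz, hD1F, zero_mul, zero_add]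
  have hmul0 : ∀ (f g : A), D 0 ((f - D 0 f) * g) = (f - D 0 f) * D 0 g := by
    intro f g
    have h1 := hD_comp 1 (-1) ((f - D 0 f) * g)
    have h2 := hD_comp 1 (-1) g
    norm_num at h1 h2
    rw [← h1, hD_parts, hmul1, h2]
  have hmulD : ∀ (m : ℤ) (f g : A), D m ((f - D 0 f) * g) = (f - D 0 f) * D m g := by
    intro m f g
    induction m using Int.induction_on with
    | zero => exact hmul0 f g
    | succ k ih =>
      have h1 := hD_comp 1 k ((f - D 0 f) * g)
      have h2 := hD_comp 1 k g
      rw [add_comm (1:ℤ) k] at h1 h2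
      rw [← h1, ih, hmul1, h2]
    | pred k ih =>
      have h1 := hD_comp (-1) (-k) ((f - D 0 f) * g)
      have h2 := hD_comp (-1) (-k) g
      have e : (-1 : ℤ) + -k = -k - 1 := by ring
      rw [e] at h1 h2
      rw [← h1, ih, hD_parts, h2]
  -- ds kills F
  have hds0 : ∀ f : A, ds (f - D 0 f) = 0 := by
    intro f; rw [hds, hD1F, mul_zero]
  have hdsmul : ∀ (f h : A), ds ((f - D 0 f) * h) = (f - D 0 f) * ds h := by
    intro f h; rw [hds, hds, hmul1]; ring
  have hnabS_F : ∀ (f : A) (x : Fin 3 → A),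
      nabS ((f - D 0 f) • x) = (f - D 0 f) • nabS x := by
    intro f x; rw [hnabS_leib, hds0, zero_smul, zero_add]
  have hinner_smul : ∀ (a : A) (u v : Fin 3 → A), inner u (a • v) = a * inner u v := by
    intro a u v
    simp only [hinner, Pi.smul_apply, smul_eq_mul]; ring
  have h2ord : ∀ (f : A) (x : Fin 3 → A),
      nabS (nabS ((f - D 0 f) • x)) + c • ((f - D 0 f) • x)
        = (f - D 0 f) • (nabS (nabS x) + c • x) := by
    intro f x
    rw [hnabS_F, hnabS_F]
    funext i
    simp only [Pi.add_apply, Pi.smul_apply, smul_eq_mul, mul_add, mul_smul_comm]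
  -- formula for del of an inverse
  have hinvf : ∀ (y : Fin 3 → A) (a aI : A), a * aI = 1 →
      del y aI = -(aI * aI * del y a) := by
    intro y a aI ha
    have h1 := hdel_mul y a aI
    rw [ha, hdel1] at h1
    linear_combination (-aI) * h1 - del y aI * ha
  -- Part 1
  have part1 : ∀ Φ ∈ F, ∀ (x : Fin 3 → A) (f : A), del (Φ • x) f = Φ * del x f := by
    intro Φ hΦ x f
    rw [hF] at hΦ
    obtain ⟨p, rfl⟩ := hΦ
    show del ((p - D 0 p) • x) f = (p - D 0 p) * del x f
    let S : Subalgebra ℝ A :=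
      { carrier := {g | del ((p - D 0 p) • x) g = (p - D 0 p) * del x g}
        mul_mem' := by
          intro a b ha hb
          simp only [Set.mem_setOf_eq] at ha hb ⊢
          rw [hdel_mul, hdel_mul, ha, hb]; ring
        one_mem' := by
          simp only [Set.mem_setOf_eq]
          rw [hdel1, hdel1, mul_zero]
        add_mem' := by
          intro a b ha hb
          simp only [Set.mem_setOf_eq] at ha hb ⊢
          rw [map_add, map_add, ha, hb, mul_add]
        zero_mem' := by
          simp only [Set.mem_setOf_eq]
          rw [map_zero, map_zero, mul_zero]
        algebraMap_mem' := by
          intro r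
          simp only [Set.mem_setOf_eq]
          rw [hdel_alg, hdel_alg, mul_zero] }
    have hlamS : lam ∈ S := by
      show del ((p - D 0 p) • x) lam = (p - D 0 p) * del x lam
      rw [hdel_lam, hdel_lam, hnabS_F, hinner_smul]
    have hkapS : kap ∈ S := by
      show del ((p - D 0 p) • x) kap = (p - D 0 p) * del x kap
      rw [hdel_kap, hdel_kap, h2ord, hnabS_F, hinner_smul, hinner_smul]; ring
    have htauS : tau ∈ S := by
      show del ((p - D 0 p) • x) tau = (p - D 0 p) * del x tau
      rw [hdel_tau, hdel_tau, h2ord, hnabS_F, hinner_smul, hinner_smul, hinner_smul,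
        hdsmul]; ring
    have hinv : ∀ (a aI : A), a * aI = 1 → a ∈ S → aI ∈ S := by
      intro a aI ha haS
      have haS' : del ((p - D 0 p) • x) a = (p - D 0 p) * del x a := haS
      show del ((p - D 0 p) • x) aI = (p - D 0 p) * del x aI
      rw [hinvf _ a aI ha, hinvf x a aI ha, haS']; ring
    have hDS : ∀ (m : ℤ), ∀ g ∈ S, D m g ∈ S := by
      intro m g hg
      have hg' : del ((p - D 0 p) • x) g = (p - D 0 p) * del x g := hg
      show del ((p - D 0 p) • x) (D m g) = (p - D 0 p) * del x (D m g)
      rw [hdel_D, hdel_D, hg', hmulD]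
    have hS : S = ⊤ := hgen S hlamS hkapS htauS (hinv lam lamI hlam hlamS)
      (hinv kap kapI hkap hkapS) hDS
    have hf : f ∈ S := by rw [hS]; exact Algebra.mem_top
    exact hf
  -- decomposition of vectors
  have hdecomp : ∀ y : Fin 3 → A, y = y 0 • T + y 1 • N + y 2 • B := by
    intro y
    funext i
    fin_cases i <;>
      simp [hT, hN, hB, Pi.add_apply, Pi.smul_apply, smul_eq_mul]
  -- Part 2
  have part2 : ∀ Φ ∈ F, ∀ (x y : Fin 3 → A), nab (Φ • x) y = Φ • nab x y := by
    intro Φ hΦ x y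
    have hΦF := hΦ
    rw [hF] at hΦ
    obtain ⟨p, rfl⟩ := hΦ
    show nab ((p - D 0 p) • x) y = (p - D 0 p) • nab x y
    have hmemF : (p - D 0 p) ∈ F := by rw [hF]; exact ⟨p, rfl⟩
    have hT2 : nab ((p - D 0 p) • x) T = (p - D 0 p) • nab x T := by
      rw [hnab_T, hnab_T, hnabS_F, hinner_smul, hinner_smul]
      funext i
      simp only [Pi.add_apply, Pi.smul_apply, smul_eq_mul]; ring
    have hN2 : nab ((p - D 0 p) • x) N = (p - D 0 p) • nab x N := by
      rw [hnab_N, hnab_N, h2ord, hnabS_F, hinner_smul, hinner_smul]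
      funext i
      simp only [Pi.sub_apply, Pi.smul_apply, smul_eq_mul]; ring
    have hB2 : nab ((p - D 0 p) • x) B = (p - D 0 p) • nab x B := by
      rw [hnab_B, hnab_B, h2ord, hnabS_F, hinner_smul, hinner_smul]
      funext i
      simp only [Pi.sub_apply, Pi.neg_apply, Pi.smul_apply, smul_eq_mul]; ring
    conv_lhs => rw [hdecomp y]
    conv_rhs => rw [hdecomp y]
    rw [map_add, map_add, map_add, map_add,
      hnab_leib, hnab_leib, hnab_leib, hnab_leib, hnab_leib, hnab_leib,
      hT2, hN2, hB2, part1 _ hmemF x (y 0), part1 _ hmemF x (y 1), part1 _ hmemF x (y 2)]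
    funext i
    simp only [Pi.add_apply, Pi.smul_apply, smul_eq_mul]; ring
  refine ⟨part1, part2, ?_⟩
  -- Part 3
  intro x y₁ y₂
  obtain ⟨a0, a1, a2, rfl⟩ : ∃ a b cc, y₁ = a • T + b • N + cc • B :=
    ⟨y₁ 0, y₁ 1, y₁ 2, hdecomp y₁⟩
  obtain ⟨b0, b1, b2, rfl⟩ : ∃ a b cc, y₂ = a • T + b • N + cc • B :=
    ⟨y₂ 0, y₂ 1, y₂ 2, hdecomp y₂⟩
  simp only [map_add, hnab_leib, hnab_T, hnab_N, hnab_B]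
  simp only [hinner, hT, hN, hB, Pi.add_apply, Pi.sub_apply, Pi.neg_apply, Pi.smul_apply,
    smul_eq_mul, Matrix.cons_val_zero, Matrix.cons_val_one, Matrix.head_cons,
    Matrix.cons_val_two, Matrix.tail_cons]
  simp only [mul_one, mul_zero, zero_mul, one_mul, add_zero, zero_add, map_add]
  simp only [hdel_mul]
  ring
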